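/- Let G be a Lie group with Lie algebra 𝔤 and let β ∈ 𝔤. Then the set G^{β+} = {g ∈ G : lim_{t→-∞} exp(tβ) g exp(-tβ) exists} is a subgroup of G. -/

import Mathlib

open Filter Topology

/-- Let `G` be a Lie group (here: a Hausdorff topological group) and let
`φ : t ↦ exp (t β)` be the one-parameter subgroup generated by `β` in the Lie algebra.
Then `G^{β+} = {g : lim_{t → -∞} exp(tβ) g exp(-tβ) exists}` is a subgroup of `G`:
it contains the identity and is closed under multiplication and inversion. -/
theorem Gbeta_plus_is_subgroup
    {G : Type*} [Group G] [TopologicalSpace G] [IsTopologicalGroup G] [T2Space G]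
    (φ : ℝ → G) (hφ : Continuous φ) (hφ0 : φ 0 = 1)
    (hφadd : ∀ s t : ℝ, φ (s + t) = φ s * φ t) :
    let S : Set G :=
      {g : G | ∃ L : G, Tendsto (fun t : ℝ => φ t * g * (φ t)⁻¹) atBot (𝓝 L)}
    (1 : G) ∈ S ∧ (∀ a ∈ S, ∀ b ∈ S, a * b ∈ S) ∧ (∀ a ∈ S, a⁻¹ ∈ S) := by
  intro S
  refine ⟨⟨1, ?_⟩, ?_, ?_⟩
  · have : (fun t : ℝ => φ t * 1 * (φ t)⁻¹) = fun _ => 1 := by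
      funext t; group
    rw [this]; exact tendsto_const_nhds
  · rintro a ⟨La, ha⟩ b ⟨Lb, hb⟩
    refine ⟨La * Lb, ?_⟩
    have : (fun t : ℝ => φ t * (a * b) * (φ t)⁻¹)
        = fun t => (φ t * a * (φ t)⁻¹) * (φ t * b * (φ t)⁻¹) := by
      funext t; group
    rw [this]; exact ha.mul hb
  · rintro a ⟨La, ha⟩
    refine ⟨La⁻¹, ?_⟩
    have : (fun t : ℝ => φ t * a⁻¹ * (φ t)⁻¹)
        = fun t => (φ t * a * (φ t)⁻¹)⁻¹ := by
      funext t; group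
    rw [this]; exact ha.inv
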